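/- Lemma 3.9 core inequality: let p ∈ ℝ^n, p̃ ∈ ℝ^ñ be probability vectors, let k̃ ∈ ℝ^{n×ñ} be a matrix all of whose entries are at least ȷ > 0, and let α ∈ ℝ^n, α̃ ∈ ℝ^ñ be strictly positive vectors. Then ∑_i p_i log α_i + ∑_j p̃_j log α̃_j ≤ log((∑_{ij} α_i k̃_ij α̃_j)/ȷ). In particular, if moreover ∑_{ij} k̃_ij = ∑_{ij} α_i k̃_ij α̃_j =: κ, then f(1_n, 1_ñ) - f(α, α̃) ≤ log(κ/ȷ). -/

import Mathlib

open Finset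

/-- The matrix-scaling objective `f(α, α̃)`. -/
noncomputable def fobj {n m : ℕ} (p : Fin n → ℝ) (pt : Fin m → ℝ)
    (kt : Fin n → Fin m → ℝ) (α : Fin n → ℝ) (αt : Fin m → ℝ) : ℝ :=
  ∑ i, ∑ j, α i * kt i j * αt j
    - ∑ i, p i * Real.log (α i) - ∑ j, pt j * Real.log (αt j)

/-- Lemma 3.9 core inequality and, in particular, the bound
`f(1ₙ, 1ₘ) - f(α, α̃) ≤ log (κ/ȷ)`. -/
theorem fobj_gap_le_log {n m : ℕ} (hn : 1 ≤ n) (hm : 1 ≤ m)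
    (p : Fin n → ℝ) (pt : Fin m → ℝ)
    (hp0 : ∀ i, 0 ≤ p i) (hpt0 : ∀ j, 0 ≤ pt j)
    (hp1 : ∑ i, p i = 1) (hpt1 : ∑ j, pt j = 1)
    (j0 : ℝ) (hj0 : 0 < j0)
    (kt : Fin n → Fin m → ℝ) (hkt : ∀ i j, j0 ≤ kt i j)
    (α : Fin n → ℝ) (αt : Fin m → ℝ)
    (hα : ∀ i, 0 < α i) (hαt : ∀ j, 0 < αt j) :
    (∑ i, p i * Real.log (α i) + ∑ j, pt j * Real.log (αt j) ≤
        Real.log ((∑ i, ∑ j, α i * kt i j * αt j) / j0)) ∧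
      ∀ κ : ℝ, (∑ i, ∑ j, kt i j) = κ → (∑ i, ∑ j, α i * kt i j * αt j) = κ →
        fobj p pt kt (fun _ => 1) (fun _ => 1) - fobj p pt kt α αt ≤
          Real.log (κ / j0) := by
  have hA : (0:ℝ) < ∑ i, α i := by
    apply Finset.sum_pos (fun i _ => hα i)
    simpa [Finset.univ_nonempty_iff, ← Fin.pos_iff_nonempty] using (show 0 < n by omega)
  have hAt : (0:ℝ) < ∑ j, αt j := by
    apply Finset.sum_pos (fun j _ => hαt j)
    simpa [Finset.univ_nonempty_iff, ← Fin.pos_iff_nonempty] using (show 0 < m by omega)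
  -- each α i ≤ total sum
  have hle1 : ∀ i, α i ≤ ∑ i, α i := fun i =>
    Finset.single_le_sum (fun i _ => (hα i).le) (Finset.mem_univ i)
  have hle2 : ∀ j, αt j ≤ ∑ j, αt j := fun j =>
    Finset.single_le_sum (fun j _ => (hαt j).le) (Finset.mem_univ j)
  have h1 : ∑ i, p i * Real.log (α i) ≤ Real.log (∑ i, α i) := by
    calc ∑ i, p i * Real.log (α i) ≤ ∑ i, p i * Real.log (∑ i, α i) := by
          apply Finset.sum_le_sum
          intro i _
          exact mul_le_mul_of_nonneg_left
            (Real.log_le_log (hα i) (hle1 i)) (hp0 i)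
      _ = Real.log (∑ i, α i) := by rw [← Finset.sum_mul, hp1, one_mul]
  have h2 : ∑ j, pt j * Real.log (αt j) ≤ Real.log (∑ j, αt j) := by
    calc ∑ j, pt j * Real.log (αt j) ≤ ∑ j, pt j * Real.log (∑ j, αt j) := by
          apply Finset.sum_le_sum
          intro j _
          exact mul_le_mul_of_nonneg_left
            (Real.log_le_log (hαt j) (hle2 j)) (hpt0 j)
      _ = Real.log (∑ j, αt j) := by rw [← Finset.sum_mul, hpt1, one_mul]
  have hS : j0 * ((∑ i, α i) * (∑ j, αt j)) ≤ ∑ i, ∑ j, α i * kt i j * αt j := by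
    have : ∑ i, ∑ j, α i * j0 * αt j ≤ ∑ i, ∑ j, α i * kt i j * αt j := by
      apply Finset.sum_le_sum; intro i _
      apply Finset.sum_le_sum; intro j _
      have := mul_le_mul_of_nonneg_left (hkt i j) (hα i).le
      exact mul_le_mul_of_nonneg_right this (hαt j).le
    calc j0 * ((∑ i, α i) * (∑ j, αt j)) = ∑ i, ∑ j, α i * j0 * αt j := by
          rw [Finset.sum_mul_sum]; rw [Finset.mul_sum]
          apply Finset.sum_congr rfl; intro i _
          rw [Finset.mul_sum]
          apply Finset.sum_congr rfl; intro j _; ring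
      _ ≤ _ := this
  have hcore : ∑ i, p i * Real.log (α i) + ∑ j, pt j * Real.log (αt j) ≤
      Real.log ((∑ i, ∑ j, α i * kt i j * αt j) / j0) := by
    have hAAt : (0:ℝ) < (∑ i, α i) * (∑ j, αt j) := mul_pos hA hAt
    calc ∑ i, p i * Real.log (α i) + ∑ j, pt j * Real.log (αt j)
        ≤ Real.log (∑ i, α i) + Real.log (∑ j, αt j) := add_le_add h1 h2
      _ = Real.log ((∑ i, α i) * (∑ j, αt j)) := (Real.log_mul hA.ne' hAt.ne').symm
      _ ≤ Real.log ((∑ i, ∑ j, α i * kt i j * αt j) / j0) := by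
          apply Real.log_le_log hAAt
          rw [le_div_iff₀ hj0]
          linarith [hS]
  refine ⟨hcore, ?_⟩
  intro κ hκ1 hκ2
  have : fobj p pt kt (fun _ => 1) (fun _ => 1) - fobj p pt kt α αt =
      ∑ i, p i * Real.log (α i) + ∑ j, pt j * Real.log (αt j) := by
    simp [fobj, hκ1, hκ2]
    ring
  rw [this, ← hκ2]
  exact hcore
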